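/- Let α be irrational and q_h the denominator of a convergent of α. If I is an interval of real numbers with length |I| ≥ 3/q_h, then there exist β ∈ I and k ∈ {1, ..., q_h} such that β + kα ∈ ℤ. -/

import Mathlib

/-- Lemma 1(ii): if `p/q` is a convergent of the irrational `α` with next
convergent denominator `q'` (so `|α - p/q| < 1/(q q')` and `gcd(p,q)=1`),
and `I = [a,b]` is an interval of length at least `3/q`, then there exist
`β ∈ I` and `k ∈ {1,...,q}` with `β + kα ∈ ℤ`. -/
theorem stmt_3 (α : ℝ) (hα : Irrational α) (p : ℤ) (q q' : ℕ)
    (hq : 0 < q) (hq' : q ≤ q') (hcop : IsCoprime p (q : ℤ))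
    (hconv : |α - (p : ℝ) / q| < 1 / (q * q'))
    (a b : ℝ) (hlen : 3 / q ≤ b - a) :
    ∃ β ∈ Set.Icc a b, ∃ k ∈ Finset.Icc 1 q, ∃ m : ℤ,
      β + (k : ℝ) * α = m := by
  haveI : NeZero q := ⟨hq.ne'⟩
  have hqR : (0:ℝ) < q := by exact_mod_cast hq
  have hq'0 : 0 < q' := lt_of_lt_of_le hq hq'
  have hq'R : (0:ℝ) < q' := by exact_mod_cast hq'0
  -- p is a unit in ZMod q
  have hpu : IsUnit ((p : ℤ) : ZMod q) := by
    obtain ⟨u, v, huv⟩ := hcop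
    refine IsUnit.of_mul_eq_one ((u : ℤ) : ZMod q) ?_
    have h1 : ((u * p + v * q : ℤ) : ZMod q) = ((1:ℤ) : ZMod q) := by rw [huv]
    push_cast at h1
    simp [ZMod.natCast_self] at h1
    rw [mul_comm]
    exact h1
  set c : ℤ := ⌈(q:ℝ)*a⌉ with hc
  set r : ℤ := (-c - 1) % q with hrdef
  have hqZ : (0:ℤ) < (q:ℤ) := by exact_mod_cast hq
  have hr0 : 0 ≤ r := Int.emod_nonneg _ hqZ.ne'
  have hrlt : r < q := Int.emod_lt_of_pos _ hqZ
  obtain ⟨n, hn⟩ : ∃ n : ℤ, r + c = (q:ℤ) * n - 1 := by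
    refine ⟨-((-c - 1) / q), ?_⟩
    have h2 := Int.mul_ediv_add_emod (-c - 1) (q:ℤ)
    rw [← hrdef] at h2
    linarith
  set x : ZMod q := ((p : ℤ) : ZMod q)⁻¹ * ((r : ℤ) : ZMod q) with hx
  set k0 := x.val with hk0
  set k := if k0 = 0 then q else k0 with hk
  have hk0lt : k0 < q := ZMod.val_lt x
  have hk1 : 1 ≤ k := by
    by_cases h : k0 = 0 <;> simp [hk, h] <;> omega
  have hkq : k ≤ q := by
    by_cases h : k0 = 0 <;> simp [hk, h] <;> omega
  have hkcast : ((k : ℕ) : ZMod q) = x := by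
    by_cases h : k0 = 0
    · have hx0 : x = 0 := by
        have := (ZMod.val_eq_zero x).mp h
        exact this
      simp [hk, h, hx0, ZMod.natCast_self]
    · rw [hk, if_neg h, hk0]
      exact ZMod.natCast_rightInverse x
  have hinv : ((p : ℤ) : ZMod q)⁻¹ * ((p : ℤ) : ZMod q) = 1 :=
    ZMod.inv_mul_of_unit _ hpu
  have hdvd : (q:ℤ) ∣ ((k:ℤ) * p - r) := by
    have h0 : (((k:ℤ) * p - r : ℤ) : ZMod q) = 0 := by
      push_cast
      rw [hkcast, hx]
      linear_combination (((r:ℤ) : ZMod q)) * hinv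
    exact (ZMod.intCast_zmod_eq_zero_iff_dvd _ _).mp h0
  obtain ⟨d, hd⟩ := hdvd
  have hkp : (k:ℤ) * p = (q:ℤ) * d + r := by linarith
  have hkpR : (k:ℝ) * (p:ℝ) = (q:ℝ)*(d:ℝ) + (r:ℝ) := by exact_mod_cast hkp
  clear_value k0 k
  clear_value x
  clear_value r
  clear_value c
  obtain ⟨E, hE⟩ : ∃ E : ℝ, E = (k:ℝ)*α - ((q:ℝ)*(d:ℝ) + (r:ℝ))/q := ⟨_, rfl⟩
  have hEb : |E| < 1/q := by
    have h1 : E = (k:ℝ) * (α - (p:ℝ)/q) := by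
      rw [hE, ← hkpR]; field_simp
    rw [h1, abs_mul, abs_of_nonneg (by positivity : (0:ℝ) ≤ (k:ℝ))]
    have hk' : (k:ℝ) ≤ (q':ℝ) := by exact_mod_cast hkq.trans hq'
    calc (k:ℝ) * |α - (p:ℝ)/q| ≤ (q':ℝ) * |α - (p:ℝ)/q| :=
          mul_le_mul_of_nonneg_right hk' (abs_nonneg _)
      _ < (q':ℝ) * (1/((q:ℝ)*(q':ℝ))) := by
          exact mul_lt_mul_of_pos_left hconv hq'R
      _ = 1/q := by field_simp
  obtain ⟨hE1, hE2⟩ := abs_lt.mp hEb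
  have hqE : (q:ℝ) * E = (q:ℝ)*((k:ℝ)*α) - ((q:ℝ)*(d:ℝ) + (r:ℝ)) := by
    rw [hE]; field_simp
  have hrR : (r:ℝ) + (c:ℝ) = (q:ℝ)*(n:ℝ) - 1 := by exact_mod_cast hn
  have hc1 : (q:ℝ)*a ≤ (c:ℝ) := by rw [hc]; exact Int.le_ceil _
  have hc2 : (c:ℝ) < (q:ℝ)*a + 1 := by
    have := Int.ceil_lt_add_one ((q:ℝ)*a)
    rw [← hc] at this
    linarith
  have h3 : 3 ≤ ((q:ℝ))*b - (q:ℝ)*a := by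
    have := (div_le_iff₀ hqR).mp hlen
    nlinarith
  have hq1 : (q:ℝ)*(1/(q:ℝ)) = 1 := by field_simp
  have hE1' : -1 < (q:ℝ)*E := by nlinarith [mul_lt_mul_of_pos_left hE1 hqR, hq1]
  have hE2' : (q:ℝ)*E < 1 := by nlinarith [mul_lt_mul_of_pos_left hE2 hqR, hq1]
  obtain ⟨m, hm⟩ : ∃ m : ℤ, m = d + n := ⟨_, rfl⟩
  have hmR : (m:ℝ) = (d:ℝ) + (n:ℝ) := by rw [hm]; push_cast; ring
  refine ⟨(m:ℝ) - (k:ℝ)*α, ⟨?_, ?_⟩, k, Finset.mem_Icc.mpr ⟨hk1, hkq⟩, m, by ring⟩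
  · have h4 : (q:ℝ)*a < (q:ℝ)*((m:ℝ) - (k:ℝ)*α) := by
      have hexp : (q:ℝ)*((m:ℝ) - (k:ℝ)*α) = (q:ℝ)*(d:ℝ) + (q:ℝ)*(n:ℝ) - (q:ℝ)*((k:ℝ)*α) := by
        rw [hmR]; ring
      rw [hexp]
      linarith
    exact le_of_lt ((mul_lt_mul_iff_right₀ hqR).mp h4)
  · have h4 : (q:ℝ)*((m:ℝ) - (k:ℝ)*α) ≤ (q:ℝ)*b := by
      have hexp : (q:ℝ)*((m:ℝ) - (k:ℝ)*α) = (q:ℝ)*(d:ℝ) + (q:ℝ)*(n:ℝ) - (q:ℝ)*((k:ℝ)*α) := by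
        rw [hmR]; ring
      rw [hexp]
      linarith
    exact (mul_le_mul_iff_right₀ hqR).mp h4
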